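/- If G is obtained by a join of H1 and H2 on vertices v1, v2 of degree at most three, H1 − v1 and H2 − v2 are connected, and H1 or H2 contains K_{3,3} as an immersion, then G contains K_{3,3} as an immersion. -/

import Mathlib

/-- A finite multigraph without loops: vertices `V`, edges `E`,
each edge has an unordered pair of distinct endpoints. -/
structure Multigraph where
  V : Type
  E : Type
  [fV : Fintype V]
  [fE : Fintype E]
  [dV : DecidableEq V]
  [dE : DecidableEq E]
  ends : E → Sym2 V
  noLoop : ∀ e, ¬ (ends e).IsDiag

attribute [instance] Multigraph.fV Multigraph.fE Multigraph.dV Multigraph.dE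

namespace Multigraph

/-- Walks in a multigraph. -/
inductive Walk (G : Multigraph) : G.V → G.V → Type
  | nil (v : G.V) : Walk G v v
  | cons {u v w : G.V} (e : G.E) (h : G.ends e = s(u, v)) (p : Walk G v w) : Walk G u w

/-- The list of edges traversed by a walk. -/
def Walk.edges {G : Multigraph} : {u v : G.V} → G.Walk u v → List G.E
  | _, _, .nil _ => []
  | _, _, .cons e _ p => e :: p.edges

/-- The list of vertices visited by a walk. -/
def Walk.support {G : Multigraph} : {u v : G.V} → G.Walk u v → List G.V
  | u, _, .nil _ => [u]
  | u, _, .cons _ _ p => u :: p.support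

/-- A walk is a path if it visits no vertex twice. -/
def Walk.IsPath {G : Multigraph} {u v : G.V} (p : G.Walk u v) : Prop := p.support.Nodup

/-- Data of an immersion of `H` into `G`: an injective map on vertices and,
for each edge of `H`, a path in `G` joining the images of its endpoints,
the paths being pairwise edge-disjoint. -/
structure ImmersionData (H G : Multigraph) where
  vmap : H.V → G.V
  inj : Function.Injective vmap
  pstart : H.E → G.V
  pend : H.E → G.V
  walk : ∀ e, G.Walk (pstart e) (pend e)
  ends_eq : ∀ e, s(pstart e, pend e) = (H.ends e).map vmap
  isPath : ∀ e, (walk e).IsPath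
  edgeDisj : ∀ e e', e ≠ e' → List.Disjoint (walk e).edges (walk e').edges

/-- `H` immerses in `G`. -/
def Immerses (H G : Multigraph) : Prop := Nonempty (ImmersionData H G)

/-- Data witnessing that `G` contains a subdivision of `H` as a subgraph
(i.e. `H` is a topological minor of `G`): as an immersion, but moreover the
paths may only meet at images of common endpoints. -/
structure SubdivisionData (H G : Multigraph) extends ImmersionData H G where
  vtxDisj : ∀ e e', e ≠ e' → ∀ x, x ∈ (walk e).support → x ∈ (walk e').support →
    ∃ w, x = vmap w ∧ w ∈ H.ends e ∧ w ∈ H.ends e'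

/-- `G` contains a subdivision of `H` as a subgraph. -/
def ContainsSubdivision (H G : Multigraph) : Prop := Nonempty (SubdivisionData H G)

/-- The complete bipartite graph `K_{3,3}`. -/
def K33 : Multigraph where
  V := Fin 3 ⊕ Fin 3
  E := Fin 3 × Fin 3
  ends e := s(Sum.inl e.1, Sum.inr e.2)
  noLoop e := by simp [Sym2.mk_isDiag_iff]

/-- The complete graph `K_5`. -/
def K5 : Multigraph where
  V := Fin 5
  E := {p : Fin 5 × Fin 5 // p.1 < p.2}
  ends e := s(e.1.1, e.1.2)
  noLoop e := by simpa [Sym2.mk_isDiag_iff] using e.2.ne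

variable (G : Multigraph)

/-- The degree of a vertex: the number of incident edges. -/
def deg (v : G.V) : ℕ := (Finset.univ.filter fun e => v ∈ G.ends e).card

/-- The multiplicity of the (possible) edge between `u` and `v`. -/
def mult (u v : G.V) : ℕ := (Finset.univ.filter fun e => G.ends e = s(u, v)).card

/-- The edge cut determined by a set `A` of vertices. -/
def cut (A : Finset G.V) : Finset G.E :=
  Finset.univ.filter fun e => ∃ u ∈ A, ∃ v ∈ Aᶜ, G.ends e = s(u, v)

/-- Every edge cut of `G` has at least `k` edges. -/
def EdgeConnGe (k : ℕ) : Prop :=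
  ∀ A : Finset G.V, A.Nonempty → A ≠ Finset.univ → k ≤ (G.cut A).card

/-- Internally 4-edge-connected: 3-edge-connected and every 3-edge cut has a
side consisting of a single vertex. -/
def Internally4EC : Prop :=
  G.EdgeConnGe 3 ∧ ∀ A : Finset G.V, A.Nonempty → A ≠ Finset.univ →
    (G.cut A).card = 3 → A.card = 1 ∨ Aᶜ.card = 1

/-- Weakly 5-edge-connected: internally 4-edge-connected and every 4-edge cut
has a side with at most two vertices. -/
def Weakly5EC : Prop :=
  G.Internally4EC ∧ ∀ A : Finset G.V, A.Nonempty → A ≠ Finset.univ →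
    (G.cut A).card = 4 → A.card ≤ 2 ∨ Aᶜ.card ≤ 2

/-- `G` is `d`-regular. -/
def IsRegular (d : ℕ) : Prop := ∀ v, G.deg v = d

/-- `G` is connected. -/
def Connected : Prop := ∀ u v : G.V, Nonempty (G.Walk u v)

/-- `v` is a cut-vertex: the remaining vertices split into two nonempty parts
with no edge between them. -/
def IsCutVertex (v : G.V) : Prop :=
  ∃ C D : Finset G.V, C.Nonempty ∧ D.Nonempty ∧ Disjoint C D ∧ v ∉ C ∧ v ∉ D ∧
    (∀ x : G.V, x ∈ C ∪ D ∨ x = v) ∧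
    ∀ e : G.E, ¬ ∃ u ∈ C, ∃ w ∈ D, G.ends e = s(u, w)

/-- `G` is 2-connected. -/
def TwoConnected : Prop :=
  G.Connected ∧ 3 ≤ Fintype.card G.V ∧ ∀ v, ¬ G.IsCutVertex v

/-- Planarity, via Kuratowski's characterization: no subdivision of `K_5`
nor of `K_{3,3}` as a subgraph. -/
def Planar : Prop := ¬ ContainsSubdivision K5 G ∧ ¬ ContainsSubdivision K33 G

end Multigraph

lemma Sym2.isDiag_map_iff' {α β : Type*} {f : α → β} (hf : Function.Injective f)
    (s : Sym2 α) : (s.map f).IsDiag ↔ s.IsDiag := by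
  induction s using Sym2.ind with
  | _ x y => simp [Sym2.mk_isDiag_iff, hf.eq_iff]

namespace Multigraph

/-- The join of `H1` and `H2` on vertices `v1` and `v2`: remove `v1` and `v2`
and match up their incident edges via the bijection `π`, joining the
corresponding other endpoints. -/
def joinGraph (H1 H2 : Multigraph) (v1 : H1.V) (v2 : H2.V)
    (π : {e : H1.E // v1 ∈ H1.ends e} ≃ {e : H2.E // v2 ∈ H2.ends e}) :
    Multigraph where
  V := {x : H1.V // x ≠ v1} ⊕ {x : H2.V // x ≠ v2}
  E := {e : H1.E // v1 ∉ H1.ends e} ⊕ {e : H2.E // v2 ∉ H2.ends e}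
       ⊕ {e : H1.E // v1 ∈ H1.ends e}
  ends e := match e with
    | .inl e => ((H1.ends e.1).attachWith (P := fun x => x ≠ v1)
        (fun _ hx hEq => e.2 (hEq ▸ hx))).map Sum.inl
    | .inr (.inl e) => ((H2.ends e.1).attachWith (P := fun x => x ≠ v2)
        (fun _ hx hEq => e.2 (hEq ▸ hx))).map Sum.inr
    | .inr (.inr e) =>
        s(Sum.inl ⟨Sym2.Mem.other' e.2, fun hEq => H1.noLoop e.1
            (by rw [← Sym2.other_spec' e.2, hEq]; exact Sym2.mk_isDiag_iff.mpr rfl)⟩,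
          Sum.inr ⟨Sym2.Mem.other' (π e).2, fun hEq => H2.noLoop (π e).1
            (by rw [← Sym2.other_spec' (π e).2, hEq]; exact Sym2.mk_isDiag_iff.mpr rfl)⟩)
  noLoop e := match e with
    | .inl e => by
        intro hd
        apply H1.noLoop e.1
        rw [← Sym2.attachWith_map_subtypeVal (s := H1.ends e.1) (P := fun x => x ≠ v1) (fun _ hx hEq => e.2 (hEq ▸ hx))]
        exact (Sym2.isDiag_map_iff' Subtype.val_injective _).mpr
          ((Sym2.isDiag_map_iff' Sum.inl_injective _).mp hd)
    | .inr (.inl e) => by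
        intro hd
        apply H2.noLoop e.1
        rw [← Sym2.attachWith_map_subtypeVal (s := H2.ends e.1) (P := fun x => x ≠ v2) (fun _ hx hEq => e.2 (hEq ▸ hx))]
        exact (Sym2.isDiag_map_iff' Subtype.val_injective _).mpr
          ((Sym2.isDiag_map_iff' Sum.inr_injective _).mp hd)
    | .inr (.inr e) => by simp [Sym2.mk_isDiag_iff]

end Multigraph

namespace Multigraph

/-- `G − v` is connected: any two vertices other than `v` are joined by a walk
avoiding `v`. -/
def ConnectedAvoiding (G : Multigraph) (v : G.V) : Prop :=
  ∀ x y : G.V, x ≠ v → y ≠ v → ∃ p : G.Walk x y, v ∉ p.support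

end Multigraph

attribute [reducible] Multigraph.joinGraph Multigraph.K33

namespace Multigraph

variable {G : Multigraph}

namespace Walk

/-- Concatenation of walks. -/
def append : {u v w : G.V} → G.Walk u v → G.Walk v w → G.Walk u w
  | _, _, _, .nil _, q => q
  | _, _, _, .cons e h p, q => .cons e h (p.append q)

@[simp] lemma support_nil (v : G.V) : (Walk.nil (G := G) v).support = [v] := rfl
@[simp] lemma edges_nil (v : G.V) : (Walk.nil (G := G) v).edges = [] := rfl
@[simp] lemma support_cons {u v w : G.V} (e : G.E) (h : G.ends e = s(u, v)) (p : G.Walk v w) :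
    (Walk.cons e h p).support = u :: p.support := rfl
@[simp] lemma edges_cons {u v w : G.V} (e : G.E) (h : G.ends e = s(u, v)) (p : G.Walk v w) :
    (Walk.cons e h p).edges = e :: p.edges := rfl

@[simp] lemma edges_append : {u v w : G.V} → (p : G.Walk u v) → (q : G.Walk v w) →
    (p.append q).edges = p.edges ++ q.edges
  | _, _, _, .nil _, q => rfl
  | _, _, _, .cons e h p, q => by simp [append, edges_append p q]

@[simp] lemma support_append : {u v w : G.V} → (p : G.Walk u v) → (q : G.Walk v w) →
    (p.append q).support = p.support ++ q.support.tail
  | _, _, _, .nil v, q => by cases q <;> simp [append]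
  | _, _, _, .cons e h p, q => by simp [append, support_append p q]

lemma start_mem_support : {u v : G.V} → (p : G.Walk u v) → u ∈ p.support
  | _, _, .nil _ => by simp
  | _, _, .cons e h p => by simp

lemma support_eq_cons : {u v : G.V} → (p : G.Walk u v) → p.support = u :: p.support.tail
  | _, _, .nil _ => rfl
  | _, _, .cons _ _ _ => rfl

lemma end_mem_support : {u v : G.V} → (p : G.Walk u v) → v ∈ p.support
  | _, _, .nil _ => by simp
  | _, _, .cons e h p => by simpa using Or.inr p.end_mem_support

lemma mem_support_of_mem_edges : {u v : G.V} → (p : G.Walk u v) → {e : G.E} → {x : G.V} →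
    e ∈ p.edges → x ∈ G.ends e → x ∈ p.support
  | _, _, .nil _, _, _, he, _ => by simp [edges] at he
  | u, v, .cons e' h p, e, x, he, hx => by
    rcases (by simpa using he) with rfl | he
    · rw [h] at hx
      rcases Sym2.mem_iff.mp hx with rfl | rfl
      · simp
      · simpa using Or.inr p.start_mem_support
    · simpa using Or.inr (p.mem_support_of_mem_edges he hx)

lemma edges_ne_nil : {u v : G.V} → (p : G.Walk u v) → u ≠ v → p.edges ≠ []
  | _, _, .nil _, h => absurd rfl h
  | _, _, .cons e h' p, _ => by simp

lemma edges_nodup_of_isPath : {u v : G.V} → (p : G.Walk u v) → p.IsPath → p.edges.Nodup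
  | _, _, .nil _, _ => by simp
  | u, v, .cons e h p, hp => by
    have hp' : (u :: p.support).Nodup := hp
    refine List.nodup_cons.mpr ⟨fun he => ?_, p.edges_nodup_of_isPath (List.nodup_cons.mp hp').2⟩
    exact (List.nodup_cons.mp hp').1
      (p.mem_support_of_mem_edges he (h ▸ Sym2.mem_mk_left u _))

lemma isPath_nil (v : G.V) : (Walk.nil (G := G) v).IsPath := by simp [IsPath]

/-- Splitting a walk at a vertex of its support. -/
lemma exists_split {x y : G.V} (p : G.Walk x y) {v : G.V} (hv : v ∈ p.support) :
    ∃ (p₁ : G.Walk x v) (p₂ : G.Walk v y),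
      p.edges = p₁.edges ++ p₂.edges ∧ p.support = p₁.support ++ p₂.support.tail := by
  induction p with
  | nil u =>
    have hv' : v = u := by simpa using hv
    subst hv'
    exact ⟨.nil v, .nil v, by simp, by simp⟩
  | cons e h p ih =>
    rename_i a b c
    by_cases hva : v = a
    · subst hva
      exact ⟨.nil v, .cons e h p, by simp, by simp⟩
    · have hv' : v ∈ p.support := by rcases (by simpa using hv) with h' | h' <;> tauto
      obtain ⟨q₁, q₂, h1, h2⟩ := ih hv'
      exact ⟨.cons e h q₁, q₂, by simp [h1], by simp [h2]⟩

lemma isPath_of_split {x y v : G.V} {p : G.Walk x y} {p₁ : G.Walk x v} {p₂ : G.Walk v y}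
    (hs : p.support = p₁.support ++ p₂.support.tail) (hp : p.IsPath) :
    p₁.IsPath ∧ p₂.IsPath ∧ ∀ z ∈ p₁.support, z ∈ p₂.support.tail → False := by
  have h : (p₁.support ++ p₂.support.tail).Nodup := hs ▸ hp
  have h1 : p₁.support.Nodup := h.of_append_left
  have h2t : p₂.support.tail.Nodup := h.of_append_right
  have hd := List.disjoint_of_nodup_append h
  refine ⟨h1, ?_, fun z hz hz' => hd hz hz'⟩
  rw [IsPath, p₂.support_eq_cons]
  exact List.nodup_cons.mpr ⟨fun hv => hd p₁.end_mem_support hv, h2t⟩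

/-- Every walk contains a path with the same endpoints. -/
lemma exists_bypass {x y : G.V} (p : G.Walk x y) :
    ∃ q : G.Walk x y, q.IsPath ∧ (∀ z ∈ q.support, z ∈ p.support) ∧
      ∀ e ∈ q.edges, e ∈ p.edges := by
  induction p with
  | nil u => exact ⟨.nil u, isPath_nil u, by simp, by simp⟩
  | cons e h p ih =>
    rename_i a b c
    obtain ⟨q, hq, hsup, hedg⟩ := ih
    by_cases hx : a ∈ q.support
    · obtain ⟨q₁, q₂, h1, h2⟩ := q.exists_split hx
      obtain ⟨-, hq₂, -⟩ := isPath_of_split h2 hq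
      refine ⟨q₂, hq₂, fun z hz => ?_, fun e' he' => ?_⟩
      · have hz2 : z ∈ q.support := by
          rw [h2]
          rw [q₂.support_eq_cons] at hz
          rcases List.mem_cons.mp hz with rfl | hz'
          · exact List.mem_append_left _ q₁.end_mem_support
          · exact List.mem_append_right _ hz'
        simpa using Or.inr (hsup _ hz2)
      · have he2 : e' ∈ q.edges := h1 ▸ List.mem_append_right _ he'
        simpa using Or.inr (hedg _ he2)
    · refine ⟨.cons e h q, ?_, ?_, ?_⟩
      · exact List.nodup_cons.mpr ⟨hx, hq⟩
      · intro z hz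
        rcases (by simpa using hz) with rfl | hz'
        · simp
        · simpa using Or.inr (hsup _ hz')
      · intro e' he'
        rcases (by simpa using he') with rfl | he''
        · simp
        · simpa using Or.inr (hedg _ he'')

lemma exists_reverse {x y : G.V} (p : G.Walk x y) :
    ∃ q : G.Walk y x, q.support = p.support.reverse ∧ q.edges = p.edges.reverse := by
  induction p with
  | nil u => exact ⟨.nil u, by simp, by simp⟩
  | cons e h p ih =>
    rename_i a b c
    obtain ⟨q, h1, h2⟩ := ih
    refine ⟨q.append (.cons e (h.trans (Sym2.eq_swap)) (.nil a)), ?_, ?_⟩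
    · simp [h1]
    · simp [h2]

lemma exists_takeUntil {x y : G.V} (p : G.Walk x y) (P : G.V → Prop) [DecidablePred P]
    (h : ∃ z ∈ p.support, P z) :
    ∃ (m : G.V) (q : G.Walk x m), P m ∧ q.support.Sublist p.support ∧
      (∀ e ∈ q.edges, e ∈ p.edges) ∧ ∀ z ∈ q.support, z ≠ m → ¬ P z := by
  induction p with
  | nil u =>
    obtain ⟨z, hz, hPz⟩ := h
    refine ⟨u, .nil u, ?_, by simp, by simp, by simp +contextual⟩
    have hz' : z = u := by simpa using hz
    exact hz' ▸ hPz
  | cons e h' p ih =>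
    rename_i a b c
    by_cases hPa : P a
    · exact ⟨a, .nil a, hPa, by simpa using List.sublist_cons_self a p.support,
        by simp, by simp +contextual⟩
    · have h'' : ∃ z ∈ p.support, P z := by
        obtain ⟨z, hz, hPz⟩ := h
        rcases (by simpa using hz) with rfl | hz'
        · exact absurd hPz hPa
        · exact ⟨z, hz', hPz⟩
      obtain ⟨m, q, hm, hsub, hedg, hlast⟩ := ih h''
      refine ⟨m, .cons e h' q, hm, by simpa using hsub, ?_, ?_⟩
      · intro e' he'
        rcases (by simpa using he') with rfl | he''
        · simp
        · simpa using Or.inr (hedg _ he'')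
      · intro z hz hzm
        rcases (by simpa using hz) with rfl | hz'
        · exact hPa
        · exact hlast z hz' hzm

lemma exists_decomp_first {x y : G.V} (p : G.Walk x y) (h : x ≠ y) :
    ∃ (f : G.E) (b : G.V) (hf : G.ends f = s(x, b)) (q : G.Walk b y),
      p.edges = f :: q.edges ∧ p.support = x :: q.support := by
  cases p with
  | nil => exact absurd rfl h
  | cons e h' q => exact ⟨e, _, h', q, rfl, rfl⟩

lemma exists_decomp_last : {x v : G.V} → (p : G.Walk x v) → p.edges ≠ [] →
    ∃ (f : G.E) (a : G.V) (hf : G.ends f = s(a, v)) (r : G.Walk x a),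
      p.edges = r.edges ++ [f] ∧ p.support = r.support ++ [v]
  | _, _, .nil _, h => absurd rfl h
  | x, v, .cons e h' q, _ => by
    cases q with
    | nil =>
      exact ⟨e, x, h', .nil x, by simp, by simp⟩
    | cons e₂ h₂ q₂ =>
      obtain ⟨f, a, hf, r, h1, h2⟩ :=
        exists_decomp_last (.cons e₂ h₂ q₂) (by simp)
      exact ⟨f, a, hf, .cons e h' r, by simp [h1], by simp [h2]⟩

lemma exists_copy {x y v : G.V} (p : G.Walk x y) (h : y = v) :
    ∃ q : G.Walk x v, q.support = p.support ∧ q.edges = p.edges := by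
  subst h; exact ⟨p, rfl, rfl⟩

end Walk

lemma attachWith_pair {α : Type*} {s : Sym2 α} {P : α → Prop} (hall : ∀ a ∈ s, P a)
    {u v : α} (h : s = s(u, v)) (hu : P u) (hv : P v) :
    s.attachWith hall = s(⟨u, hu⟩, ⟨v, hv⟩) := by
  apply Sym2.map.injective Subtype.val_injective
  rw [Sym2.attachWith_map_subtypeVal, Sym2.map_pair_eq, h]

section Lift

variable {H1 H2 : Multigraph} {v1 : H1.V} {v2 : H2.V}
  {π : {e : H1.E // v1 ∈ H1.ends e} ≃ {e : H2.E // v2 ∈ H2.ends e}}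

/-- Forget the subtype proofs on vertices of the join. -/
def valV : (joinGraph H1 H2 v1 v2 π).V → H1.V ⊕ H2.V :=
  Sum.map Subtype.val Subtype.val

/-- Forget the subtype proofs on edges of the join. -/
def valE : (joinGraph H1 H2 v1 v2 π).E → H1.E ⊕ H2.E ⊕ H1.E :=
  Sum.map Subtype.val (Sum.map Subtype.val Subtype.val)

lemma valV_injective : Function.Injective (valV (H1 := H1) (H2 := H2) (v1 := v1) (v2 := v2) (π := π)) := by
  intro a b h
  cases a <;> cases b <;> simp [valV] at h ⊢ <;> exact Subtype.ext h

lemma joinGraph_ends_inl {e : H1.E} (he : v1 ∉ H1.ends e) {x v : H1.V}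
    (hx : x ≠ v1) (hv : v ≠ v1) (h : H1.ends e = s(x, v)) :
    (joinGraph H1 H2 v1 v2 π).ends (Sum.inl ⟨e, he⟩) =
      s(Sum.inl ⟨x, hx⟩, Sum.inl ⟨v, hv⟩) := by
  show ((H1.ends e).attachWith _).map Sum.inl = _
  rw [attachWith_pair _ h hx hv, Sym2.map_pair_eq]

lemma joinGraph_ends_inrl {e : H2.E} (he : v2 ∉ H2.ends e) {x v : H2.V}
    (hx : x ≠ v2) (hv : v ≠ v2) (h : H2.ends e = s(x, v)) :
    (joinGraph H1 H2 v1 v2 π).ends (Sum.inr (Sum.inl ⟨e, he⟩)) =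
      s(Sum.inr ⟨x, hx⟩, Sum.inr ⟨v, hv⟩) := by
  show ((H2.ends e).attachWith _).map Sum.inr = _
  rw [attachWith_pair _ h hx hv, Sym2.map_pair_eq]

lemma joinGraph_ends_cross {e : H1.E} (he : v1 ∈ H1.ends e) {a : H1.V}
    (ha : H1.ends e = s(v1, a)) (ha1 : a ≠ v1)
    (ht : Sym2.Mem.other' (π ⟨e, he⟩).2 ≠ v2) :
    (joinGraph H1 H2 v1 v2 π).ends (Sum.inr (Sum.inr ⟨e, he⟩)) =
      s(Sum.inl ⟨a, ha1⟩, Sum.inr ⟨Sym2.Mem.other' (π ⟨e, he⟩).2, ht⟩) := by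
  have h3 : Sym2.Mem.other' he = a := Sym2.congr_right.mp ((Sym2.other_spec' he).trans ha)
  apply Sym2.map.injective (valV_injective (π := π))
  rw [Sym2.map_pair_eq]
  calc Sym2.map valV ((joinGraph H1 H2 v1 v2 π).ends (Sum.inr (Sum.inr ⟨e, he⟩)))
      = s(Sum.inl (Sym2.Mem.other' he), Sum.inr (Sym2.Mem.other' (π ⟨e, he⟩).2)) := rfl
    _ = s(valV (Sum.inl ⟨a, ha1⟩), valV (Sum.inr ⟨Sym2.Mem.other' (π ⟨e, he⟩).2, ht⟩)) := by
        rw [h3]; rfl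

/-- Lift a walk of `H1` avoiding `v1` to the join. -/
def liftWalkL : {x y : H1.V} → (p : H1.Walk x y) → (hx : x ≠ v1) → (hy : y ≠ v1) →
    (h : ∀ z ∈ p.support, z ≠ v1) →
    (joinGraph H1 H2 v1 v2 π).Walk (Sum.inl ⟨x, hx⟩) (Sum.inl ⟨y, hy⟩)
  | _, _, .nil x, hx, hy, h => .nil _
  | _, _, .cons e he p, hx, hy, h =>
    .cons (Sum.inl ⟨e, by
        rw [he]
        intro hm
        rcases Sym2.mem_iff.mp hm with h1 | h1
        · exact hx h1.symm
        · exact h _ (by simpa using Or.inr p.start_mem_support) h1.symm⟩)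
      (joinGraph_ends_inl _ hx (h _ (by simpa using Or.inr p.start_mem_support)) he)
      (liftWalkL p _ hy (fun z hz => h z (by simpa using Or.inr hz)))

lemma liftWalkL_support : {x y : H1.V} → (p : H1.Walk x y) → (hx : x ≠ v1) → (hy : y ≠ v1) →
    (h : ∀ z ∈ p.support, z ≠ v1) →
    (liftWalkL (π := π) p hx hy h).support.map valV = p.support.map Sum.inl
  | _, _, .nil x, _, _, _ => rfl
  | _, _, .cons e he p, hx, hy, h => by
    simp only [liftWalkL, Walk.support_cons, List.map_cons]
    rw [liftWalkL_support p _ _ _]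
    rfl

lemma liftWalkL_edges : {x y : H1.V} → (p : H1.Walk x y) → (hx : x ≠ v1) → (hy : y ≠ v1) →
    (h : ∀ z ∈ p.support, z ≠ v1) →
    (liftWalkL (π := π) p hx hy h).edges.map valE = p.edges.map Sum.inl
  | _, _, .nil x, _, _, _ => rfl
  | _, _, .cons e he p, hx, hy, h => by
    simp only [liftWalkL, Walk.edges_cons, List.map_cons]
    rw [liftWalkL_edges p _ _ _]
    rfl

/-- Lift a walk of `H2` avoiding `v2` to the join. -/
def liftWalkR : {x y : H2.V} → (p : H2.Walk x y) → (hx : x ≠ v2) → (hy : y ≠ v2) →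
    (h : ∀ z ∈ p.support, z ≠ v2) →
    (joinGraph H1 H2 v1 v2 π).Walk (Sum.inr ⟨x, hx⟩) (Sum.inr ⟨y, hy⟩)
  | _, _, .nil x, hx, hy, h => .nil _
  | _, _, .cons e he p, hx, hy, h =>
    .cons (Sum.inr (Sum.inl ⟨e, by
        rw [he]
        intro hm
        rcases Sym2.mem_iff.mp hm with h1 | h1
        · exact hx h1.symm
        · exact h _ (by simpa using Or.inr p.start_mem_support) h1.symm⟩))
      (joinGraph_ends_inrl _ hx (h _ (by simpa using Or.inr p.start_mem_support)) he)
      (liftWalkR p _ hy (fun z hz => h z (by simpa using Or.inr hz)))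

lemma liftWalkR_support : {x y : H2.V} → (p : H2.Walk x y) → (hx : x ≠ v2) → (hy : y ≠ v2) →
    (h : ∀ z ∈ p.support, z ≠ v2) →
    (liftWalkR (π := π) p hx hy h).support.map valV = p.support.map Sum.inr
  | _, _, .nil x, _, _, _ => rfl
  | _, _, .cons e he p, hx, hy, h => by
    simp only [liftWalkR, Walk.support_cons, List.map_cons]
    rw [liftWalkR_support p _ _ _]
    rfl

lemma liftWalkR_edges : {x y : H2.V} → (p : H2.Walk x y) → (hx : x ≠ v2) → (hy : y ≠ v2) →
    (h : ∀ z ∈ p.support, z ≠ v2) →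
    (liftWalkR (π := π) p hx hy h).edges.map valE =
      p.edges.map (fun e => Sum.inr (Sum.inl e))
  | _, _, .nil x, _, _, _ => rfl
  | _, _, .cons e he p, hx, hy, h => by
    simp only [liftWalkR, Walk.edges_cons, List.map_cons]
    rw [liftWalkR_edges p _ _ _]
    rfl

lemma valE_crossE (ce : {e : H1.E // v1 ∈ H1.ends e}) :
    valE (H2 := H2) (v2 := v2) (π := π) (Sum.inr (Sum.inr ce)) = Sum.inr (Sum.inr ce.val) := rfl

lemma liftWalkL_isPath {x y : H1.V} (p : H1.Walk x y) (hx : x ≠ v1) (hy : y ≠ v1)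
    (h : ∀ z ∈ p.support, z ≠ v1) (hp : p.IsPath) :
    (liftWalkL (π := π) p hx hy h).IsPath := by
  apply List.Nodup.of_map valV
  rw [liftWalkL_support]
  exact hp.map (fun a b => by simp)

lemma liftWalkR_isPath {x y : H2.V} (p : H2.Walk x y) (hx : x ≠ v2) (hy : y ≠ v2)
    (h : ∀ z ∈ p.support, z ≠ v2) (hp : p.IsPath) :
    (liftWalkR (π := π) p hx hy h).IsPath := by
  apply List.Nodup.of_map valV
  rw [liftWalkR_support]
  exact hp.map (fun a b => by simp)

end Lift

lemma ends_eq_pair (G : Multigraph) (e : G.E) : ∃ x y, G.ends e = s(x, y) ∧ x ≠ y := by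
  have key : ∀ z : Sym2 G.V, ¬ z.IsDiag → ∃ x y, z = s(x, y) ∧ x ≠ y := by
    intro z
    induction z using Sym2.ind with
    | _ x y => exact fun hd => ⟨x, y, rfl, fun h => hd (Sym2.mk_isDiag_iff.mpr h)⟩
  exact key _ (G.noLoop e)

/-- The median construction: three vertices avoiding `v` in a graph whose
deletion of `v` is connected can be joined to a common vertex by pairwise
edge-disjoint paths avoiding `v`. -/
lemma median_exists {H : Multigraph} {v : H.V} (hconn : H.ConnectedAvoiding v)
    (t : Fin 3 → H.V) (ht : ∀ j, t j ≠ v) :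
    ∃ m : H.V, m ≠ v ∧ ∃ El : Fin 3 → List H.E,
      (∀ j j', j ≠ j' → List.Disjoint (El j) (El j')) ∧
      ∀ j, ∃ p : H.Walk (t j) m, p.edges = El j ∧ p.IsPath ∧ ∀ z ∈ p.support, z ≠ v := by
  obtain ⟨q12', hq12'⟩ := hconn (t 0) (t 1) (ht 0) (ht 1)
  obtain ⟨Q12, hQ12path, hQ12sup, hQ12edg⟩ := q12'.exists_bypass
  have hQ12v : ∀ z ∈ Q12.support, z ≠ v := fun z hz hzv => hq12' (hzv ▸ hQ12sup z hz)
  obtain ⟨q3', hq3'⟩ := hconn (t 2) (t 0) (ht 2) (ht 0)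
  obtain ⟨Q3, hQ3path, hQ3sup, hQ3edg⟩ := q3'.exists_bypass
  have hQ3v : ∀ z ∈ Q3.support, z ≠ v := fun z hz hzv => hq3' (hzv ▸ hQ3sup z hz)
  have hex : ∃ z ∈ Q3.support, z ∈ Q12.support :=
    ⟨t 0, Q3.end_mem_support, Q12.start_mem_support⟩
  obtain ⟨m, QC, hmQ12, hsubl, hedgsub, hfirst⟩ :=
    Q3.exists_takeUntil (· ∈ Q12.support) hex
  obtain ⟨A, B, hABe, hABs⟩ := Q12.exists_split hmQ12
  obtain ⟨hApath, hBpath, hABdisj⟩ := Walk.isPath_of_split hABs hQ12path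
  obtain ⟨Brev, hBrevs, hBreve⟩ := B.exists_reverse
  have hAsub : ∀ z ∈ A.support, z ∈ Q12.support := fun z hz => by
    rw [hABs]; exact List.mem_append_left _ hz
  have hBsub : ∀ z ∈ B.support, z ∈ Q12.support := by
    intro z hz
    rw [B.support_eq_cons] at hz
    rcases List.mem_cons.mp hz with rfl | hz'
    · exact hmQ12
    · rw [hABs]; exact List.mem_append_right _ hz'
  have hQCsub : ∀ z ∈ QC.support, z ∈ Q3.support := fun z hz => hsubl.mem hz
  -- disjointness of A and B edges
  have hABd : List.Disjoint A.edges B.edges := by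
    have := Q12.edges_nodup_of_isPath hQ12path
    rw [hABe] at this
    exact List.disjoint_of_nodup_append this
  -- a shared edge between QC and a sub-walk of Q12 is impossible
  have hQCd : ∀ (x₁ x₂ : H.V) (W : H.Walk x₁ x₂), (∀ z ∈ W.support, z ∈ Q12.support) →
      List.Disjoint W.edges QC.edges := by
    intro x₁ x₂ W hW e heW heQC
    obtain ⟨x, y, hxy, hne⟩ := ends_eq_pair H e
    have hx1 : x ∈ QC.support := QC.mem_support_of_mem_edges heQC (hxy ▸ Sym2.mem_mk_left x y)
    have hy1 : y ∈ QC.support := QC.mem_support_of_mem_edges heQC (hxy ▸ Sym2.mem_mk_right x y)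
    have hx2 : x ∈ Q12.support := hW _ (W.mem_support_of_mem_edges heW (hxy ▸ Sym2.mem_mk_left x y))
    have hy2 : y ∈ Q12.support := hW _ (W.mem_support_of_mem_edges heW (hxy ▸ Sym2.mem_mk_right x y))
    have hxm : x = m := by by_contra hne'; exact hfirst x hx1 hne' hx2
    have hym : y = m := by by_contra hne'; exact hfirst y hy1 hne' hy2
    exact hne (hxm.trans hym.symm)
  refine ⟨m, hQ12v m hmQ12, ![A.edges, Brev.edges, QC.edges], ?_, ?_⟩
  · have d01 : List.Disjoint A.edges Brev.edges := by
      intro a ha hb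
      rw [hBreve] at hb
      exact hABd ha (List.mem_reverse.mp hb)
    have d02 : List.Disjoint A.edges QC.edges := hQCd _ _ A hAsub
    have d12 : List.Disjoint Brev.edges QC.edges := by
      intro a ha hb
      rw [hBreve] at ha
      exact hQCd _ _ B hBsub (List.mem_reverse.mp ha) hb
    intro j j' hjj'
    fin_cases j <;> fin_cases j' <;>
      first
        | exact absurd rfl hjj'
        | exact d01
        | exact d02
        | exact d12
        | exact List.disjoint_comm.mp d01
        | exact List.disjoint_comm.mp d02
        | exact List.disjoint_comm.mp d12
  · intro j
    fin_cases j
    · exact ⟨A, rfl, hApath, fun z hz => hQ12v z (hAsub z hz)⟩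
    · refine ⟨Brev, rfl, ?_, fun z hz => hQ12v z (hBsub z (by rwa [← List.mem_reverse, ← hBrevs]))⟩
      show Brev.support.Nodup
      rw [hBrevs]
      exact List.nodup_reverse.mpr hBpath
    · exact ⟨QC, rfl, hsubl.nodup hQ3path, fun z hz => hQ3v z (hQCsub z hz)⟩

section Transfer

variable {G G' : Multigraph}

/-- Map a walk along a (local) isomorphism of multigraphs. -/
def Walk.mapIso (φV : G.V → G'.V) (φE : G.E → G'.E)
    (hends : ∀ e, G'.ends (φE e) = (G.ends e).map φV) :
    {u v : G.V} → G.Walk u v → G'.Walk (φV u) (φV v)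
  | _, _, .nil u => .nil _
  | _, _, .cons e h p =>
      .cons (φE e) (by rw [hends, h, Sym2.map_pair_eq]) (Walk.mapIso φV φE hends p)

lemma Walk.mapIso_support (φV : G.V → G'.V) (φE : G.E → G'.E)
    (hends : ∀ e, G'.ends (φE e) = (G.ends e).map φV) :
    {u v : G.V} → (p : G.Walk u v) →
      (p.mapIso φV φE hends).support = p.support.map φV
  | _, _, .nil u => rfl
  | _, _, .cons e h p => by
    simp only [mapIso, support_cons, List.map_cons]
    rw [Walk.mapIso_support φV φE hends p]

lemma Walk.mapIso_edges (φV : G.V → G'.V) (φE : G.E → G'.E)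
    (hends : ∀ e, G'.ends (φE e) = (G.ends e).map φV) :
    {u v : G.V} → (p : G.Walk u v) →
      (p.mapIso φV φE hends).edges = p.edges.map φE
  | _, _, .nil u => rfl
  | _, _, .cons e h p => by
    simp only [mapIso, edges_cons, List.map_cons]
    rw [Walk.mapIso_edges φV φE hends p]

lemma Immerses.transfer {H : Multigraph} (h : Immerses H G) (φV : G.V → G'.V)
    (hV : Function.Injective φV) (φE : G.E → G'.E) (hE : Function.Injective φE)
    (hends : ∀ e, G'.ends (φE e) = (G.ends e).map φV) : Immerses H G' := by
  obtain ⟨imm⟩ := h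
  refine ⟨⟨φV ∘ imm.vmap, hV.comp imm.inj, φV ∘ imm.pstart, φV ∘ imm.pend,
    fun e => (imm.walk e).mapIso φV φE hends, ?_, ?_, ?_⟩⟩
  · intro e
    show s(φV _, φV _) = _
    rw [← Sym2.map_pair_eq φV, imm.ends_eq, Sym2.map_map]
  · intro e
    show ((imm.walk e).mapIso φV φE hends).support.Nodup
    rw [Walk.mapIso_support]
    exact (imm.isPath e).map hV
  · intro e e' hne x hx hx'
    rw [Walk.mapIso_edges] at hx hx'
    obtain ⟨a, ha, rfl⟩ := List.mem_map.mp hx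
    obtain ⟨b, hb, hba⟩ := List.mem_map.mp hx'
    exact imm.edgeDisj e e' hne ha (hE hba ▸ hb)

end Transfer

/-- The join construction is symmetric, up to isomorphism. -/
lemma immerses_joinGraph_comm {H1 H2 : Multigraph} {v1 : H1.V} {v2 : H2.V}
    {π : {e : H1.E // v1 ∈ H1.ends e} ≃ {e : H2.E // v2 ∈ H2.ends e}}
    (h : Immerses K33 (joinGraph H2 H1 v2 v1 π.symm)) :
    Immerses K33 (joinGraph H1 H2 v1 v2 π) := by
  have hswap : Function.Injective (Sum.swap :
      (joinGraph H2 H1 v2 v1 π.symm).V → (joinGraph H1 H2 v1 v2 π).V) :=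
    Function.LeftInverse.injective (g := Sum.swap) (fun x => Sum.swap_swap x)
  refine h.transfer Sum.swap hswap
    (fun e => match e with
      | .inl e2 => .inr (.inl e2)
      | .inr (.inl e1) => .inl e1
      | .inr (.inr ec) => .inr (.inr (π.symm ec))) ?_ ?_
  · apply Function.LeftInverse.injective (g := fun e : (joinGraph H1 H2 v1 v2 π).E =>
      (match e with
        | .inl e1 => .inr (.inl e1)
        | .inr (.inl e2) => .inl e2
        | .inr (.inr ec) => .inr (.inr (π ec)) : (joinGraph H2 H1 v2 v1 π.symm).E))
    intro e
    rcases e with e | e | e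
    · rfl
    · rfl
    · show Sum.inr (Sum.inr (π (π.symm e))) = _
      rw [π.apply_symm_apply]
  · intro e
    match e with
    | .inl e2 =>
      apply Sym2.map.injective (valV_injective (π := π))
      show Sym2.map valV (((H2.ends e2.1).attachWith _).map Sum.inr)
          = Sym2.map valV (Sym2.map Sum.swap (((H2.ends e2.1).attachWith _).map Sum.inl))
      rw [Sym2.map_map, Sym2.map_map, Sym2.map_map]
      rfl
    | .inr (.inl e1) =>
      apply Sym2.map.injective (valV_injective (π := π))
      show Sym2.map valV (((H1.ends e1.1).attachWith _).map Sum.inl)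
          = Sym2.map valV (Sym2.map Sum.swap (((H1.ends e1.1).attachWith _).map Sum.inr))
      rw [Sym2.map_map, Sym2.map_map, Sym2.map_map]
      rfl
    | .inr (.inr ec) =>
      have hππ : π (π.symm ec) = ec := π.apply_symm_apply ec
      have h2 : Sym2.Mem.other' ((π (π.symm ec)).2) = Sym2.Mem.other' ec.2 :=
        congrArg (fun z : {e // v2 ∈ H2.ends e} => Sym2.Mem.other' z.2) hππ
      apply Sym2.map.injective (valV_injective (π := π))
      calc Sym2.map valV ((joinGraph H1 H2 v1 v2 π).ends (.inr (.inr (π.symm ec))))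
          = s(Sum.inl (Sym2.Mem.other' (π.symm ec).2),
              Sum.inr (Sym2.Mem.other' ((π (π.symm ec)).2))) := rfl
        _ = s(Sum.inl (Sym2.Mem.other' (π.symm ec).2),
              Sum.inr (Sym2.Mem.other' ec.2)) := by rw [h2]
        _ = Sym2.map valV (Sym2.map Sum.swap
              ((joinGraph H2 H1 v2 v1 π.symm).ends (.inr (.inr ec)))) := Sym2.eq_swap

lemma interior_two_edges {G : Multigraph} {x y v : G.V} (p : G.Walk x y) (hp : p.IsPath)
    (hv : v ∈ p.support) (hx : v ≠ x) (hy : v ≠ y) :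
    ∃ g₁ g₂, g₁ ≠ g₂ ∧ g₁ ∈ p.edges ∧ g₂ ∈ p.edges ∧ v ∈ G.ends g₁ ∧ v ∈ G.ends g₂ := by
  obtain ⟨p₁, p₂, hE, hS⟩ := p.exists_split hv
  obtain ⟨g₁, a, hg₁, r, hre, hrs⟩ := p₁.exists_decomp_last (p₁.edges_ne_nil (Ne.symm hx))
  obtain ⟨g₂, b, hg₂, q, hqe, hqs⟩ := p₂.exists_decomp_first hy
  have hg₁p : g₁ ∈ p₁.edges := by rw [hre]; simp
  have hg₂p : g₂ ∈ p₂.edges := by rw [hqe]; simp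
  have hnd : p.edges.Nodup := p.edges_nodup_of_isPath hp
  rw [hE] at hnd
  refine ⟨g₁, g₂, fun hgg => List.disjoint_of_nodup_append hnd hg₁p (hgg ▸ hg₂p), ?_, ?_, ?_, ?_⟩
  · rw [hE]; exact List.mem_append_left _ hg₁p
  · rw [hE]; exact List.mem_append_right _ hg₂p
  · rw [hg₁]; exact Sym2.mem_mk_right _ _
  · rw [hg₂]; exact Sym2.mem_mk_left _ _

lemma card_le_deg {G : Multigraph} {v : G.V} (s : Finset G.E) (h : ∀ e ∈ s, v ∈ G.ends e) :
    s.card ≤ G.deg v :=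
  Finset.card_le_card (fun e he => Finset.mem_filter.mpr ⟨Finset.mem_univ e, h e he⟩)

lemma K33_ends_eq (e : K33.E) : K33.ends e = s(Sum.inl e.1, Sum.inr e.2) := rfl

/-- The three edges at a vertex of `K33`. -/
def K33nbr : K33.V → Fin 3 → K33.E
  | .inl i => fun j => (i, j)
  | .inr i => fun j => (j, i)

lemma K33nbr_inj (w : K33.V) : Function.Injective (K33nbr w) := by
  cases w with
  | inl i => exact fun a b h => congrArg Prod.snd h
  | inr i => exact fun a b h => congrArg Prod.fst h

lemma K33_mem_nbr (w : K33.V) (j : Fin 3) : w ∈ K33.ends (K33nbr w j) := by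
  cases w with
  | inl i => exact Sym2.mem_mk_left _ _
  | inr i => exact Sym2.mem_mk_right _ _

/-- The index of an edge at a vertex of `K33`. -/
def K33idx (w : K33.V) (e : K33.E) : Fin 3 :=
  match w with | .inl _ => e.2 | .inr _ => e.1

lemma K33nbr_idx (w : K33.V) (e : K33.E) (h : w ∈ K33.ends e) :
    K33nbr w (K33idx w e) = e := by
  cases w with
  | inl i =>
    have h' : Sum.inl i ∈ s(Sum.inl e.1, Sum.inr e.2) := h
    rcases Sym2.mem_iff.mp h' with h'' | h''
    · obtain rfl : i = e.1 := by injection h''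
      rfl
    · exact absurd h'' (by simp)
  | inr i =>
    have h' : Sum.inr i ∈ s(Sum.inl e.1, Sum.inr e.2) := h
    rcases Sym2.mem_iff.mp h' with h'' | h''
    · exact absurd h'' (by simp)
    · obtain rfl : i = e.2 := by injection h''
      rfl

/-- The main construction: lifting a `K33` immersion from `H1` to the join. -/
lemma immerses_joinGraph_of_left {H1 H2 : Multigraph} {v1 : H1.V} {v2 : H2.V}
    (π : {e : H1.E // v1 ∈ H1.ends e} ≃ {e : H2.E // v2 ∈ H2.ends e})
    (hd1 : H1.deg v1 ≤ 3) (hconn2 : H2.ConnectedAvoiding v2)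
    (himm : Immerses K33 H1) : Immerses K33 (joinGraph H1 H2 v1 v2 π) := by
  classical
  obtain ⟨imm⟩ := himm
  have hndiag : ∀ e : K33.E, imm.pstart e ≠ imm.pend e := by
    intro e h
    apply K33.noLoop e
    rw [← Sym2.isDiag_map_iff' imm.inj, ← imm.ends_eq e, ← h]
    exact Sym2.mk_isDiag_iff.mpr rfl
  have hstart_im : ∀ e : K33.E, ∃ u, u ∈ K33.ends e ∧ imm.vmap u = imm.pstart e := by
    intro e
    have h : imm.pstart e ∈ (K33.ends e).map imm.vmap := by
      rw [← imm.ends_eq e]; exact Sym2.mem_mk_left _ _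
    obtain ⟨u, hu, hu'⟩ := Sym2.mem_map.mp h
    exact ⟨u, hu, hu'⟩
  have hend_im : ∀ e : K33.E, ∃ u, u ∈ K33.ends e ∧ imm.vmap u = imm.pend e := by
    intro e
    have h : imm.pend e ∈ (K33.ends e).map imm.vmap := by
      rw [← imm.ends_eq e]; exact Sym2.mem_mk_right _ _
    obtain ⟨u, hu, hu'⟩ := Sym2.mem_map.mp h
    exact ⟨u, hu, hu'⟩
  by_cases hr : ∃ w, imm.vmap w = v1
  · -- v1 is the image of a branch vertex
    obtain ⟨w, hw⟩ := hr
    have keyj : ∀ j : Fin 3, ∃ (f : H1.E) (a sv : H1.V) (r : H1.Walk sv a),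
        H1.ends f = s(a, v1) ∧ f ∈ (imm.walk (K33nbr w j)).edges ∧
        (∀ x ∈ r.edges, x ∈ (imm.walk (K33nbr w j)).edges) ∧ r.IsPath ∧
        (∀ z ∈ r.support, z ≠ v1) ∧ sv ≠ v1 ∧
        s(sv, v1) = s(imm.pstart (K33nbr w j), imm.pend (K33nbr w j)) := by
      intro j
      have hv1mem : v1 ∈ s(imm.pstart (K33nbr w j), imm.pend (K33nbr w j)) := by
        rw [imm.ends_eq (K33nbr w j)]
        exact Sym2.mem_map.mpr ⟨w, K33_mem_nbr w j, hw⟩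
      rcases Sym2.mem_iff.mp hv1mem with hv1 | hv1
      · -- v1 = pstart : use the reversed walk
        obtain ⟨rev, hrevs, hreve⟩ := (imm.walk (K33nbr w j)).exists_reverse
        obtain ⟨q, hqs, hqe⟩ := rev.exists_copy hv1.symm
        have hne : imm.pend (K33nbr w j) ≠ v1 :=
          fun hh => hndiag (K33nbr w j) (hv1.symm.trans hh.symm)
        obtain ⟨f, a, hf, r, hre2, hrs2⟩ := q.exists_decomp_last (q.edges_ne_nil hne)
        have hmemiff : ∀ x, x ∈ q.edges → x ∈ (imm.walk (K33nbr w j)).edges := by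
          intro x hx
          rw [hqe, hreve, List.mem_reverse] at hx
          exact hx
        have hqnodup : q.support.Nodup := by
          rw [hqs, hrevs]
          exact List.nodup_reverse.mpr (imm.isPath (K33nbr w j))
        rw [hrs2] at hqnodup
        refine ⟨f, a, imm.pend (K33nbr w j), r, hf,
          hmemiff f (by rw [hre2]; simp),
          fun x hx => hmemiff x (by rw [hre2]; exact List.mem_append_left _ hx),
          hqnodup.of_append_left, ?_, hne, ?_⟩
        · intro z hz hzeq
          subst hzeq
          exact (List.disjoint_of_nodup_append hqnodup) hz (by simp)
        · rw [← hv1]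
          exact Sym2.eq_swap
      · -- v1 = pend : use the walk directly
        obtain ⟨q, hqs, hqe⟩ := (imm.walk (K33nbr w j)).exists_copy hv1.symm
        have hne : imm.pstart (K33nbr w j) ≠ v1 :=
          fun hh => hndiag (K33nbr w j) (hh.trans hv1)
        obtain ⟨f, a, hf, r, hre2, hrs2⟩ := q.exists_decomp_last (q.edges_ne_nil hne)
        have hmemiff : ∀ x, x ∈ q.edges → x ∈ (imm.walk (K33nbr w j)).edges := by
          intro x hx
          rw [hqe] at hx
          exact hx
        have hqnodup : q.support.Nodup := by
          rw [hqs]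
          exact imm.isPath (K33nbr w j)
        rw [hrs2] at hqnodup
        refine ⟨f, a, imm.pstart (K33nbr w j), r, hf,
          hmemiff f (by rw [hre2]; simp),
          fun x hx => hmemiff x (by rw [hre2]; exact List.mem_append_left _ hx),
          hqnodup.of_append_left, ?_, hne, ?_⟩
        · intro z hz hzeq
          subst hzeq
          exact (List.disjoint_of_nodup_append hqnodup) hz (by simp)
        · rw [← hv1]
    choose fE aV sV rW hfE hfEm hrsub hrpath hrv1 hsne hpairj using keyj
    have hfinj : ∀ j j', j ≠ j' → fE j ≠ fE j' := fun j j' hjj heq =>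
      imm.edgeDisj _ _ (fun h => hjj (K33nbr_inj w h)) (hfEm j) (heq ▸ hfEm j')
    have haj : ∀ j, aV j ≠ v1 := fun j h => H1.noLoop (fE j) (by
      rw [hfE j, h]; exact Sym2.mk_isDiag_iff.mpr rfl)
    have hfv : ∀ j, v1 ∈ H1.ends (fE j) := fun j => by
      rw [hfE j]; exact Sym2.mem_mk_right _ _
    have ht : ∀ j, Sym2.Mem.other' ((π ⟨fE j, hfv j⟩).2) ≠ v2 := fun j h =>
      H2.noLoop (π ⟨fE j, hfv j⟩).1 (by
        rw [← Sym2.other_spec' (π ⟨fE j, hfv j⟩).2, h]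
        exact Sym2.mk_isDiag_iff.mpr rfl)
    obtain ⟨m, hm, El, hEld, hEl⟩ := median_exists hconn2
      (fun j => Sym2.Mem.other' ((π ⟨fE j, hfv j⟩).2)) ht
    choose PW hPe hPp hPv using hEl
    have hep : ∀ e : K33.E, w ∉ K33.ends e →
        imm.pstart e ≠ v1 ∧ imm.pend e ≠ v1 := by
      intro e hwe
      constructor
      · obtain ⟨u, hu, hu'⟩ := hstart_im e
        intro hh
        exact hwe ((imm.inj (hu'.trans (hh.trans hw.symm))) ▸ hu)
      · obtain ⟨u, hu, hu'⟩ := hend_im e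
        intro hh
        exact hwe ((imm.inj (hu'.trans (hh.trans hw.symm))) ▸ hu)
    have hnb : ∀ e, w ∉ K33.ends e → v1 ∉ (imm.walk e).support := by
      intro e hwe hv1e
      obtain ⟨hps, hpe⟩ := hep e hwe
      obtain ⟨g₁, g₂, n12, hg₁m, hg₂m, hg₁v, hg₂v⟩ :=
        interior_two_edges (imm.walk e) (imm.isPath e) hv1e (Ne.symm hps) (Ne.symm hpe)
      have hnee : ∀ j, K33nbr w j ≠ e := fun j h => hwe (h ▸ K33_mem_nbr w j)
      have hfg1 : ∀ j, fE j ≠ g₁ := fun j h =>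
        imm.edgeDisj _ _ (hnee j) (hfEm j) (h ▸ hg₁m)
      have hfg2 : ∀ j, fE j ≠ g₂ := fun j h =>
        imm.edgeDisj _ _ (hnee j) (hfEm j) (h ▸ hg₂m)
      have h01 : fE 0 ≠ fE 1 := hfinj 0 1 (by decide)
      have h02 : fE 0 ≠ fE 2 := hfinj 0 2 (by decide)
      have h12 : fE 1 ≠ fE 2 := hfinj 1 2 (by decide)
      have hcard : ({fE 0, fE 1, fE 2, g₁} : Finset H1.E).card = 4 := by
        rw [Finset.card_insert_of_notMem (by simp [h01, h02, hfg1 0]),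
          Finset.card_insert_of_notMem (by simp [h12, hfg1 1]),
          Finset.card_insert_of_notMem (by simp [hfg1 2]), Finset.card_singleton]
      have hle := card_le_deg ({fE 0, fE 1, fE 2, g₁} : Finset H1.E) (by
        intro x hx
        rcases Finset.mem_insert.mp hx with rfl | hx
        · exact hfv 0
        rcases Finset.mem_insert.mp hx with rfl | hx
        · exact hfv 1
        rcases Finset.mem_insert.mp hx with rfl | hx
        · exact hfv 2
        · rw [Finset.mem_singleton.mp hx]; exact hg₁v)
      rw [hcard] at hle
      omega
    set vmap' : K33.V → (joinGraph H1 H2 v1 v2 π).V := fun u =>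
      if h : u = w then Sum.inr ⟨m, hm⟩
      else Sum.inl ⟨imm.vmap u, fun hE2 => h (imm.inj (hE2.trans hw.symm))⟩ with hvm
    have hvmidw : vmap' w = Sum.inr ⟨m, hm⟩ := by simp [hvm]
    have hvmL : ∀ u, u ≠ w → valV (vmap' u) = Sum.inl (imm.vmap u) := by
      intro u h
      simp only [hvm]
      rw [dif_neg h]
      rfl
    have hinj' : Function.Injective vmap' := by
      intro a b hab
      by_cases ha : a = w
      · by_cases hb : b = w
        · rw [ha, hb]
        · rw [ha, hvmidw] at hab
          have := congrArg valV hab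
          rw [hvmL b hb] at this
          simp [valV] at this
      · by_cases hb : b = w
        · rw [hb, hvmidw] at hab
          have := congrArg valV hab
          rw [hvmL a ha] at this
          simp [valV] at this
        · have := congrArg valV hab
          rw [hvmL a ha, hvmL b hb] at this
          exact imm.inj (by injection this)
    have key : ∀ e : K33.E, ∃ (a b : (joinGraph H1 H2 v1 v2 π).V)
        (p : (joinGraph H1 H2 v1 v2 π).Walk a b),
        s(a, b) = (K33.ends e).map vmap' ∧ p.IsPath ∧
        (∀ y ∈ p.edges.map valE, ∀ h1 : H1.E, y = Sum.inl h1 → h1 ∈ (imm.walk e).edges) ∧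
        (w ∈ K33.ends e → ∀ y ∈ p.edges.map valE,
          (∀ h2 : H2.E, y = Sum.inr (Sum.inl h2) → h2 ∈ (PW (K33idx w e)).edges) ∧
          (∀ h1 : H1.E, y = Sum.inr (Sum.inr h1) → h1 = fE (K33idx w e))) ∧
        (w ∉ K33.ends e → ∀ y ∈ p.edges.map valE,
          ∃ h1, y = Sum.inl h1 ∧ h1 ∈ (imm.walk e).edges) := by
      intro e
      by_cases hbe : w ∈ K33.ends e
      · -- branch walk: lift the trimmed walk, cross, and use the median path
        set j := K33idx w e with hj
        have hnbe : K33nbr w j = e := K33nbr_idx w e hbe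
        have hC := joinGraph_ends_cross (π := π) (hfv j)
          ((hfE j).trans Sym2.eq_swap) (haj j) (ht j)
        refine ⟨_, _, (liftWalkL (rW j) (hsne j) (haj j) (hrv1 j)).append
          (.cons _ hC (liftWalkR (PW j) (ht j) hm (hPv j))), ?_, ?_, ?_, ?_, ?_⟩
        · -- the ends
          rw [K33_ends_eq, Sym2.map_pair_eq]
          have hcomb : s(sV j, v1) =
              s(imm.vmap (Sum.inl e.1), imm.vmap (Sum.inr e.2)) := by
            rw [hpairj j, hnbe, imm.ends_eq e, K33_ends_eq, Sym2.map_pair_eq]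
          have hbe' : w ∈ s(Sum.inl e.1, Sum.inr e.2) := hbe
          rcases Sym2.mem_iff.mp hbe' with hwe | hwe
          · have hv2 : imm.vmap (Sum.inl e.1) = v1 := by rw [← hwe, hw]
            have hne2 : Sum.inr e.2 ≠ w := by rw [hwe]; simp
            have hsj : sV j = imm.vmap (Sum.inr e.2) := by
              rw [hv2] at hcomb
              rcases Sym2.eq_iff.mp hcomb with ⟨h1', h2'⟩ | ⟨h1', h2'⟩
              · exact absurd h1' (hsne j)
              · exact h1'
            refine Sym2.eq_iff.mpr (Or.inr ⟨?_, ?_⟩)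
            · apply valV_injective (π := π)
              rw [hvmL _ hne2]
              exact congrArg Sum.inl hsj
            · rw [← hwe, hvmidw]
          · have hv2 : imm.vmap (Sum.inr e.2) = v1 := by rw [← hwe, hw]
            have hne2 : Sum.inl e.1 ≠ w := by rw [hwe]; simp
            have hsj : sV j = imm.vmap (Sum.inl e.1) := by
              rw [hv2] at hcomb
              rcases Sym2.eq_iff.mp hcomb with ⟨h1', h2'⟩ | ⟨h1', h2'⟩
              · exact h1'
              · exact absurd h1' (hsne j)
            refine Sym2.eq_iff.mpr (Or.inl ⟨?_, ?_⟩)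
            · apply valV_injective (π := π)
              rw [hvmL _ hne2]
              exact congrArg Sum.inl hsj
            · rw [← hwe, hvmidw]
        · -- path
          apply List.Nodup.of_map valV
          have hsup : ((liftWalkL (π := π) (rW j) (hsne j) (haj j) (hrv1 j)).append
              (.cons _ hC (liftWalkR (PW j) (ht j) hm (hPv j)))).support.map valV =
              (rW j).support.map Sum.inl ++ (PW j).support.map Sum.inr := by
            simp [Walk.support_append, List.map_append, liftWalkL_support, liftWalkR_support]
            rw [liftWalkL_support, liftWalkR_support]
          rw [hsup]
          refine List.Nodup.append ((hrpath j).map Sum.inl_injective)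
            ((hPp j).map Sum.inr_injective) ?_
          intro y hy hy'
          obtain ⟨z, -, rfl⟩ := List.mem_map.mp hy
          obtain ⟨z', -, hz'⟩ := List.mem_map.mp hy'
          simp at hz'
        · -- H1 edges come from the original walk
          intro y hy h1 hyh1
          have hedg : ((liftWalkL (π := π) (rW j) (hsne j) (haj j) (hrv1 j)).append
              (.cons _ hC (liftWalkR (PW j) (ht j) hm (hPv j)))).edges.map valE =
              (rW j).edges.map Sum.inl ++ Sum.inr (Sum.inr (fE j)) ::
                (PW j).edges.map (fun e => Sum.inr (Sum.inl e)) := by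
            simp [Walk.edges_append, List.map_append, liftWalkL_edges, liftWalkR_edges,
              valE_crossE]
            rw [liftWalkL_edges, liftWalkR_edges]
          rw [hedg] at hy
          subst hyh1
          rcases List.mem_append.mp hy with h | h
          · obtain ⟨z, hz, hzeq⟩ := List.mem_map.mp h
            obtain rfl : z = h1 := by injection hzeq
            rw [← hnbe]
            exact hrsub j _ hz
          · rcases List.mem_cons.mp h with h' | h'
            · simp at h'
            · obtain ⟨z, -, hzeq⟩ := List.mem_map.mp h'
              simp at hzeq
        · -- the H2 edges and the crossing edge
          intro _ y hy
          have hedg : ((liftWalkL (π := π) (rW j) (hsne j) (haj j) (hrv1 j)).append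
              (.cons _ hC (liftWalkR (PW j) (ht j) hm (hPv j)))).edges.map valE =
              (rW j).edges.map Sum.inl ++ Sum.inr (Sum.inr (fE j)) ::
                (PW j).edges.map (fun e => Sum.inr (Sum.inl e)) := by
            simp [Walk.edges_append, List.map_append, liftWalkL_edges, liftWalkR_edges,
              valE_crossE]
            rw [liftWalkL_edges, liftWalkR_edges]
          rw [hedg] at hy
          constructor
          · intro h2 hy2
            subst hy2
            rcases List.mem_append.mp hy with h | h
            · obtain ⟨z, -, hzeq⟩ := List.mem_map.mp h
              simp at hzeq
            · rcases List.mem_cons.mp h with h' | h'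
              · simp at h'
              · obtain ⟨z, hz, hzeq⟩ := List.mem_map.mp h'
                obtain rfl : z = h2 := by
                  have := hzeq
                  simp at this
                  exact this
                exact hz
          · intro h1 hy1
            subst hy1
            rcases List.mem_append.mp hy with h | h
            · obtain ⟨z, -, hzeq⟩ := List.mem_map.mp h
              simp at hzeq
            · rcases List.mem_cons.mp h with h' | h'
              · have := h'
                simp at this
                exact this
              · obtain ⟨z, -, hzeq⟩ := List.mem_map.mp h'
                simp at hzeq
        · exact fun habs => absurd hbe habs
      · -- walks not at the branch vertex lift directly
        obtain ⟨hps, hpe⟩ := hep e hbe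
        have hsv : ∀ z ∈ (imm.walk e).support, z ≠ v1 :=
          fun z hz h => (hnb e hbe) (h ▸ hz)
        refine ⟨_, _, liftWalkL (imm.walk e) hps hpe hsv, ?_,
          liftWalkL_isPath _ _ _ _ (imm.isPath e), ?_,
          fun habs => absurd habs hbe, ?_⟩
        · -- ends
          have hA : Sum.inl e.1 ≠ w := fun h => hbe (h ▸ Sym2.mem_mk_left _ _)
          have hB : Sum.inr e.2 ≠ w := fun h => hbe (h ▸ Sym2.mem_mk_right _ _)
          apply Sym2.map.injective (valV_injective (π := π))
          rw [Sym2.map_pair_eq, K33_ends_eq, Sym2.map_pair_eq, Sym2.map_pair_eq,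
            hvmL _ hA, hvmL _ hB]
          have h := imm.ends_eq e
          rw [K33_ends_eq, Sym2.map_pair_eq] at h
          calc s(valV (Sum.inl (⟨imm.pstart e, hps⟩ : {x : H1.V // x ≠ v1})),
                valV (Sum.inl (⟨imm.pend e, hpe⟩ : {x : H1.V // x ≠ v1})))
              = Sym2.map Sum.inl s(imm.pstart e, imm.pend e) := by
                rw [Sym2.map_pair_eq]; rfl
            _ = Sym2.map Sum.inl s(imm.vmap (Sum.inl e.1), imm.vmap (Sum.inr e.2)) := by
                rw [h]
            _ = s(Sum.inl (imm.vmap (Sum.inl e.1)), Sum.inl (imm.vmap (Sum.inr e.2))) := by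
                rw [Sym2.map_pair_eq]
        · intro y hy h1 hyh1
          rw [liftWalkL_edges] at hy
          obtain ⟨h1', hh1', rfl⟩ := List.mem_map.mp hy
          obtain rfl : h1 = h1' := by injection hyh1.symm
          exact hh1'
        · intro _ y hy
          rw [liftWalkL_edges] at hy
          obtain ⟨h1', hh1', rfl⟩ := List.mem_map.mp hy
          exact ⟨h1', rfl, hh1'⟩
    choose av bv pv hends hpath hspecI hspecB hspecN using key
    refine ⟨⟨vmap', hinj', av, bv, pv, hends, hpath, ?_⟩⟩
    intro e e' hne x hx hx'
    have hy := List.mem_map_of_mem (f := valE) hx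
    have hy' := List.mem_map_of_mem (f := valE) hx'
    by_cases hbe : w ∈ K33.ends e
    · by_cases hbe' : w ∈ K33.ends e'
      · have hjj : K33idx w e ≠ K33idx w e' := fun h =>
          hne (by rw [← K33nbr_idx w e hbe, ← K33nbr_idx w e' hbe', h])
        rcases hEx : valE x with h1 | h2 | h1
        · exact imm.edgeDisj e e' hne (hspecI e _ hy h1 hEx) (hspecI e' _ hy' h1 hEx)
        · have m1 := (hspecB e hbe _ hy).1 h2 hEx
          have m2 := (hspecB e' hbe' _ hy').1 h2 hEx
          rw [hPe] at m1 m2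
          exact hEld _ _ hjj m1 m2
        · have m1 := (hspecB e hbe _ hy).2 h1 hEx
          have m2 := (hspecB e' hbe' _ hy').2 h1 hEx
          exact hfinj _ _ hjj (m1 ▸ m2 ▸ rfl)
      · obtain ⟨h1, hyeq, h1m⟩ := hspecN e' hbe' _ hy'
        exact imm.edgeDisj e e' hne (hspecI e _ hy h1 hyeq) h1m
    · obtain ⟨h1, hyeq, h1m⟩ := hspecN e hbe _ hy
      exact imm.edgeDisj e e' hne h1m (hspecI e' _ hy' h1 hyeq)
  · -- v1 is not the image of a branch vertex
    have hnr : ∀ u, imm.vmap u ≠ v1 := fun u h => hr ⟨u, h⟩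
    have hse : ∀ e : K33.E, imm.pstart e ≠ v1 ∧ imm.pend e ≠ v1 := by
      intro e
      obtain ⟨u, -, hu⟩ := hstart_im e
      obtain ⟨u', -, hu'⟩ := hend_im e
      exact ⟨hu ▸ hnr u, hu' ▸ hnr u'⟩
    set vmap' : K33.V → (joinGraph H1 H2 v1 v2 π).V :=
      fun u => Sum.inl ⟨imm.vmap u, hnr u⟩ with hvmap'
    have hinj' : Function.Injective vmap' := by
      intro a b hab
      apply imm.inj
      have := congrArg valV hab
      simpa [valV, vmap'] using this
    have hpair : ∀ (e : K33.E) (h1 : imm.pstart e ≠ v1) (h2 : imm.pend e ≠ v1),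
        s(Sum.inl ⟨imm.pstart e, h1⟩, (Sum.inl ⟨imm.pend e, h2⟩ :
          (joinGraph H1 H2 v1 v2 π).V)) = (K33.ends e).map vmap' := by
      intro e h1 h2
      have h := imm.ends_eq e
      rw [K33_ends_eq] at h ⊢
      rw [Sym2.map_pair_eq] at h ⊢
      rcases Sym2.eq_iff.mp h with ⟨ha, hb⟩ | ⟨ha, hb⟩
      · exact Sym2.eq_iff.mpr (Or.inl ⟨congrArg Sum.inl (Subtype.ext ha),
          congrArg Sum.inl (Subtype.ext hb)⟩)
      · exact Sym2.eq_iff.mpr (Or.inr ⟨congrArg Sum.inl (Subtype.ext ha),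
          congrArg Sum.inl (Subtype.ext hb)⟩)
    have huniq : ∀ e e', v1 ∈ (imm.walk e).support → v1 ∈ (imm.walk e').support →
        e = e' := by
      intro e e' he he'
      by_contra hne
      obtain ⟨g₁, g₂, n12, hg₁m, hg₂m, hg₁v, hg₂v⟩ :=
        interior_two_edges (imm.walk e) (imm.isPath e) he
          (Ne.symm (hse e).1) (Ne.symm (hse e).2)
      obtain ⟨g₃, g₄, n34, hg₃m, hg₄m, hg₃v, hg₄v⟩ :=
        interior_two_edges (imm.walk e') (imm.isPath e') he'
          (Ne.symm (hse e').1) (Ne.symm (hse e').2)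
      have hdisj := imm.edgeDisj e e' hne
      have n13 : g₁ ≠ g₃ := fun h => hdisj hg₁m (h ▸ hg₃m)
      have n14 : g₁ ≠ g₄ := fun h => hdisj hg₁m (h ▸ hg₄m)
      have n23 : g₂ ≠ g₃ := fun h => hdisj hg₂m (h ▸ hg₃m)
      have n24 : g₂ ≠ g₄ := fun h => hdisj hg₂m (h ▸ hg₄m)
      have hcard : ({g₁, g₂, g₃, g₄} : Finset H1.E).card = 4 := by
        rw [Finset.card_insert_of_notMem (by simp [n12, n13, n14]),
          Finset.card_insert_of_notMem (by simp [n23, n24]),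
          Finset.card_insert_of_notMem (by simp [n34]), Finset.card_singleton]
      have hle := card_le_deg ({g₁, g₂, g₃, g₄} : Finset H1.E) (by
        intro x hx
        rcases Finset.mem_insert.mp hx with rfl | hx
        · exact hg₁v
        rcases Finset.mem_insert.mp hx with rfl | hx
        · exact hg₂v
        rcases Finset.mem_insert.mp hx with rfl | hx
        · exact hg₃v
        · rw [Finset.mem_singleton.mp hx]; exact hg₄v)
      rw [hcard] at hle
      omega
    have key : ∀ e : K33.E, ∃ (a b : (joinGraph H1 H2 v1 v2 π).V)
        (p : (joinGraph H1 H2 v1 v2 π).Walk a b),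
        s(a, b) = (K33.ends e).map vmap' ∧ p.IsPath ∧
        (∀ y ∈ p.edges.map valE, ∀ h1 : H1.E, y = Sum.inl h1 → h1 ∈ (imm.walk e).edges) ∧
        (v1 ∉ (imm.walk e).support → ∀ y ∈ p.edges.map valE,
          ∃ h1, y = Sum.inl h1 ∧ h1 ∈ (imm.walk e).edges) := by
      intro e
      obtain ⟨hps, hpe⟩ := hse e
      by_cases hv : v1 ∈ (imm.walk e).support
      · -- the one walk through v1: replace the passage by a detour through H2
        obtain ⟨p₁, p₂, hE, hS⟩ := (imm.walk e).exists_split hv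
        obtain ⟨hp₁, hp₂, hd12⟩ := Walk.isPath_of_split hS (imm.isPath e)
        obtain ⟨f, a, hf, r0, hre, hrs⟩ := p₁.exists_decomp_last (p₁.edges_ne_nil hps)
        obtain ⟨g, b, hg, q, hqe, hqs⟩ := p₂.exists_decomp_first (Ne.symm hpe)
        have hfm : v1 ∈ H1.ends f := by rw [hf]; exact Sym2.mem_mk_right _ _
        have hgm : v1 ∈ H1.ends g := by rw [hg]; exact Sym2.mem_mk_left _ _
        have hav : a ≠ v1 := fun h => H1.noLoop f (by
          rw [hf, h]; exact Sym2.mk_isDiag_iff.mpr rfl)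
        have hbv : b ≠ v1 := fun h => H1.noLoop g (by
          rw [hg, h]; exact Sym2.mk_isDiag_iff.mpr rfl)
        have hr0v : ∀ z ∈ r0.support, z ≠ v1 := by
          intro z hz rfl'
          subst rfl'
          have : p₁.support.Nodup := hp₁
          rw [hrs] at this
          exact (List.disjoint_of_nodup_append this) hz (by simp)
        have hqv : ∀ z ∈ q.support, z ≠ v1 := by
          intro z hz rfl'
          subst rfl'
          have : p₂.support.Nodup := hp₂
          rw [hqs] at this
          exact (List.nodup_cons.mp this).1 hz
        have htf : Sym2.Mem.other' (π ⟨f, hfm⟩).2 ≠ v2 := fun h => H2.noLoop (π ⟨f, hfm⟩).1 (by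
          rw [← Sym2.other_spec' (π ⟨f, hfm⟩).2, h]; exact Sym2.mk_isDiag_iff.mpr rfl)
        have htg : Sym2.Mem.other' (π ⟨g, hgm⟩).2 ≠ v2 := fun h => H2.noLoop (π ⟨g, hgm⟩).1 (by
          rw [← Sym2.other_spec' (π ⟨g, hgm⟩).2, h]; exact Sym2.mk_isDiag_iff.mpr rfl)
        obtain ⟨mid0, hmid0⟩ := hconn2 _ _ htf htg
        obtain ⟨mid, hmidpath, hmidsup, hmidedg⟩ := mid0.exists_bypass
        have hmidv : ∀ z ∈ mid.support, z ≠ v2 :=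
          fun z hz h => hmid0 (h ▸ hmidsup z hz)
        have hCF := joinGraph_ends_cross (π := π) hfm (hf.trans Sym2.eq_swap) hav htf
        have hCG := (joinGraph_ends_cross (π := π) hgm hg hbv htg).trans Sym2.eq_swap
        refine ⟨_, _, (liftWalkL r0 hps hav hr0v).append (.cons _ hCF
          ((liftWalkR mid htf htg hmidv).append (.cons _ hCG (liftWalkL q hbv hpe hqv)))),
          hpair e hps hpe, ?_, ?_, fun habs => absurd hv habs⟩
        · -- path
          apply List.Nodup.of_map valV
          have hsup : ((liftWalkL (π := π) r0 hps hav hr0v).append (.cons _ hCF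
              ((liftWalkR mid htf htg hmidv).append
                (.cons _ hCG (liftWalkL q hbv hpe hqv))))).support.map valV =
              r0.support.map Sum.inl ++ (mid.support.map Sum.inr ++ q.support.map Sum.inl) := by
            simp [Walk.support_append, List.map_append, liftWalkL_support, liftWalkR_support]
            rw [liftWalkL_support, liftWalkR_support, liftWalkL_support]
          rw [hsup]
          have hnd : (imm.walk e).support.Nodup := imm.isPath e
          rw [hS, hrs, hqs] at hnd
          simp only [List.tail_cons] at hnd
          have hr0nd : r0.support.Nodup :=
            ((List.nodup_append.mp hnd).1).of_append_left
          have hqnd : q.support.Nodup := (List.nodup_append.mp hnd).2.1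
          have hrq : ∀ z ∈ r0.support, z ∉ q.support := by
            intro z hz hz'
            exact (List.nodup_append.mp hnd).2.2 _ (List.mem_append_left _ hz) _ hz' rfl
          refine List.Nodup.append (hr0nd.map Sum.inl_injective)
            (List.Nodup.append (hmidpath.map Sum.inr_injective)
              (hqnd.map Sum.inl_injective) ?_) ?_
          · intro y hy hy'
            obtain ⟨z, -, rfl⟩ := List.mem_map.mp hy
            obtain ⟨z', -, hz'⟩ := List.mem_map.mp hy'
            simp at hz'
          · intro y hy hy'
            obtain ⟨z, hz, rfl⟩ := List.mem_map.mp hy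
            rcases List.mem_append.mp hy' with h' | h'
            · obtain ⟨z', -, hz'⟩ := List.mem_map.mp h'
              simp at hz'
            · obtain ⟨z', hz', hz''⟩ := List.mem_map.mp h'
              obtain rfl : z = z' := by injection hz''.symm
              exact hrq z hz hz'
        · -- the H1 edges used are edges of the original walk
          intro y hy h1 hyh1
          have hedg : ((liftWalkL (π := π) r0 hps hav hr0v).append (.cons _ hCF
              ((liftWalkR mid htf htg hmidv).append
                (.cons _ hCG (liftWalkL q hbv hpe hqv))))).edges.map valE =
              r0.edges.map Sum.inl ++ (Sum.inr (Sum.inr f) ::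
                (mid.edges.map (fun e => Sum.inr (Sum.inl e)) ++
                  Sum.inr (Sum.inr g) :: q.edges.map Sum.inl)) := by
            simp [Walk.edges_append, List.map_append, liftWalkL_edges, liftWalkR_edges,
              valE_crossE]
            rw [liftWalkL_edges, liftWalkR_edges, liftWalkL_edges]
          rw [hedg] at hy
          subst hyh1
          rcases List.mem_append.mp hy with h | h
          · obtain ⟨z, hz, hzeq⟩ := List.mem_map.mp h
            obtain rfl : z = h1 := by injection hzeq
            rw [hE]
            exact List.mem_append_left _ (by rw [hre]; exact List.mem_append_left _ hz)
          · rcases List.mem_cons.mp h with h' | h'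
            · simp at h'
            rcases List.mem_append.mp h' with h'' | h''
            · obtain ⟨z, -, hzeq⟩ := List.mem_map.mp h''
              simp at hzeq
            rcases List.mem_cons.mp h'' with h3 | h3
            · simp at h3
            · obtain ⟨z, hz, hzeq⟩ := List.mem_map.mp h3
              obtain rfl : z = h1 := by injection hzeq
              rw [hE]
              refine List.mem_append_right _ ?_
              rw [hqe]
              exact List.mem_cons_of_mem _ hz
      · have hsv : ∀ z ∈ (imm.walk e).support, z ≠ v1 := fun z hz h => hv (h ▸ hz)
        refine ⟨_, _, liftWalkL (imm.walk e) hps hpe hsv, hpair e hps hpe,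
          liftWalkL_isPath _ _ _ _ (imm.isPath e), ?_, ?_⟩
        · intro y hy h1 hyh1
          rw [liftWalkL_edges] at hy
          obtain ⟨h1', hh1', rfl⟩ := List.mem_map.mp hy
          obtain rfl : h1 = h1' := by injection hyh1.symm
          exact hh1'
        · intro _ y hy
          rw [liftWalkL_edges] at hy
          obtain ⟨h1', hh1', rfl⟩ := List.mem_map.mp hy
          exact ⟨h1', rfl, hh1'⟩
    choose av bv pv hends hpath hspec1 hspec2 using key
    refine ⟨⟨vmap', hinj', av, bv, pv, hends, hpath, ?_⟩⟩
    intro e e' hne x hx hx'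
    have hy := List.mem_map_of_mem (f := valE) hx
    have hy' := List.mem_map_of_mem (f := valE) hx'
    by_cases hv : v1 ∈ (imm.walk e).support
    · have hv' : v1 ∉ (imm.walk e').support := fun h => hne (huniq _ _ hv h)
      obtain ⟨h1, hyeq, h1m⟩ := hspec2 e' hv' _ hy'
      exact imm.edgeDisj e e' hne (hspec1 e _ hy h1 hyeq) h1m
    · obtain ⟨h1, hyeq, h1m⟩ := hspec2 e hv _ hy
      exact imm.edgeDisj e e' hne h1m (hspec1 e' _ hy' h1 hyeq)

end Multigraph

open Multigraph in
/-- If `G` is a join of `H1` and `H2` on vertices `v1`, `v2` of degree at most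
three, `H1 − v1` and `H2 − v2` are connected, and `H1` or `H2` contains
`K_{3,3}` as an immersion, then so does `G`. -/
theorem joinGraph_k33_of_k33 (H1 H2 : Multigraph) (v1 : H1.V) (v2 : H2.V)
    (π : {e : H1.E // v1 ∈ H1.ends e} ≃ {e : H2.E // v2 ∈ H2.ends e})
    (hc1 : 3 ≤ Fintype.card H1.V) (hc2 : 3 ≤ Fintype.card H2.V)
    (hd1 : H1.deg v1 ≤ 3) (hd2 : H2.deg v2 ≤ 3)
    (hconn1 : H1.ConnectedAvoiding v1) (hconn2 : H2.ConnectedAvoiding v2)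
    (himm : Immerses K33 H1 ∨ Immerses K33 H2) :
    Immerses K33 (joinGraph H1 H2 v1 v2 π) := by
  rcases himm with h | h
  · exact immerses_joinGraph_of_left π hd1 hconn2 h
  · exact immerses_joinGraph_comm (immerses_joinGraph_of_left π.symm hd2 hconn1 h)
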